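/- arXiv:1109.2283 — 4 statements merged into one kernel-verified Lean document; each statement's English description precedes it below -/
import Mathlib

section
/- Let G be a topological group with a compatible left-invariant metric d_G and identity 1_G. For g ∈ G and r ≥ 0 define Γ_G(g,r) = max{r, sup{d_G(1_G, g⁻¹hg) : h ∈ G, d_G(1_G,h) ≤ r}}. Then for all g₁, g₂ ∈ G and r ≥ 0, |Γ_G(g₁,r) − Γ_G(g₂,r)| ≤ 2·d_G(g₁,g₂). -/
/-- Proposition 2.2: for a topological group `G` with a compatible left-invariant
metric `d`, with `Γ_G(g,r) = max r (sup {d 1 (g⁻¹hg) : d 1 h ≤ r})`,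
we have `|Γ_G(g₁,r) − Γ_G(g₂,r)| ≤ 2 d(g₁,g₂)`. -/
theorem stmt_0 {G : Type*} [Group G] [MetricSpace G] [IsTopologicalGroup G]
    (hleft : ∀ g h k : G, dist (g * h) (g * k) = dist h k)
    (ΓG : G → ℝ → ℝ)
    (hΓ : ∀ g r, ΓG g r =
      max r (sSup {s : ℝ | ∃ h : G, dist (1 : G) h ≤ r ∧ s = dist (1 : G) (g⁻¹ * h * g)}))
    (hbdd : ∀ g r, BddAbove {s : ℝ | ∃ h : G, dist (1 : G) h ≤ r ∧ s = dist (1 : G) (g⁻¹ * h * g)}) :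
    ∀ (g₁ g₂ : G) (r : ℝ), 0 ≤ r → |ΓG g₁ r - ΓG g₂ r| ≤ 2 * dist g₁ g₂ := by
  have inv : ∀ g h k : G, dist h k = dist (g * h) (g * k) := fun g h k => (hleft g h k).symm
  have key : ∀ (g₁ g₂ : G) (r : ℝ), 0 ≤ r → ΓG g₁ r ≤ ΓG g₂ r + 2 * dist g₁ g₂ := by
    intro g₁ g₂ r hr
    have hd : (0:ℝ) ≤ 2 * dist g₁ g₂ := by positivity
    rw [hΓ g₁ r, hΓ g₂ r]
    have hne : ({s : ℝ | ∃ h : G, dist (1 : G) h ≤ r ∧ s = dist (1 : G) (g₂⁻¹ * h * g₂)}).Nonempty := by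
      refine ⟨dist (1 : G) (g₂⁻¹ * 1 * g₂), 1, by simpa using hr, rfl⟩
    have hsup : sSup {s : ℝ | ∃ h : G, dist (1 : G) h ≤ r ∧ s = dist (1 : G) (g₁⁻¹ * h * g₁)}
        ≤ sSup {s : ℝ | ∃ h : G, dist (1 : G) h ≤ r ∧ s = dist (1 : G) (g₂⁻¹ * h * g₂)}
          + 2 * dist g₁ g₂ := by
      have hnn : (0:ℝ) ≤ sSup {s : ℝ | ∃ h : G, dist (1 : G) h ≤ r ∧ s = dist (1 : G) (g₂⁻¹ * h * g₂)} :=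
        Real.sSup_nonneg (by rintro s ⟨h, hh, rfl⟩; exact dist_nonneg)
      refine Real.sSup_le ?_ (le_trans hnn (le_add_of_nonneg_right hd))
      rintro s ⟨h, hh, rfl⟩
      have mem2 : dist (1 : G) (g₂⁻¹ * h * g₂) ∈
          {s : ℝ | ∃ h : G, dist (1 : G) h ≤ r ∧ s = dist (1 : G) (g₂⁻¹ * h * g₂)} :=
        ⟨h, hh, rfl⟩
      have le2 := le_csSup (hbdd g₂ r) mem2
      have step1 : dist (1 : G) (g₁⁻¹ * h * g₁)
          ≤ dist (1 : G) (g₁⁻¹ * h * g₂) + dist g₂ g₁ := by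
        have := dist_triangle (1 : G) (g₁⁻¹ * h * g₂) (g₁⁻¹ * h * g₁)
        have h2 : dist (g₁⁻¹ * h * g₂) (g₁⁻¹ * h * g₁) = dist g₂ g₁ := by
          rw [mul_assoc, mul_assoc, hleft, hleft]
        linarith [this, h2.le, h2.ge]
      have step2 : dist (1 : G) (g₁⁻¹ * h * g₂)
          ≤ dist g₁ g₂ + dist (1 : G) (g₂⁻¹ * h * g₂) := by
        have e1 : dist (1 : G) (g₁⁻¹ * h * g₂) = dist g₁ (h * g₂) := by
          rw [inv g₁ (1:G) (g₁⁻¹ * h * g₂)]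
          simp [mul_assoc]
        have e2 : dist (1 : G) (g₂⁻¹ * h * g₂) = dist g₂ (h * g₂) := by
          rw [inv g₂ (1:G) (g₂⁻¹ * h * g₂)]
          simp [mul_assoc]
        rw [e1, e2]
        exact dist_triangle g₁ g₂ (h * g₂)
      have := dist_comm g₂ g₁
      linarith
    calc max r (sSup {s : ℝ | ∃ h : G, dist (1 : G) h ≤ r ∧ s = dist (1 : G) (g₁⁻¹ * h * g₁)})
        ≤ max (r + 2 * dist g₁ g₂)
            (sSup {s : ℝ | ∃ h : G, dist (1 : G) h ≤ r ∧ s = dist (1 : G) (g₂⁻¹ * h * g₂)}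
              + 2 * dist g₁ g₂) :=
          max_le_max (by linarith) hsup
      _ = max r (sSup {s : ℝ | ∃ h : G, dist (1 : G) h ≤ r ∧ s = dist (1 : G) (g₂⁻¹ * h * g₂)})
            + 2 * dist g₁ g₂ := by
          rw [max_add_add_right]
  intro g₁ g₂ r hr
  rw [abs_sub_le_iff]
  constructor
  · linarith [key g₁ g₂ r hr]
  · have := key g₂ g₁ r hr
    rw [dist_comm g₂ g₁] at this
    linarith
end

section
/- Let X be a set and let f : ℝ₊ → ℝ₊ satisfy f(r₁) + f(r₂) ≥ f(r₁ + r₂) for all r₁, r₂ ≥ 0 (subadditivity), f monotone increasing, f(r) ≥ r, f(r) = 0 iff r = 0, and f continuous. If f is not the identity, then there exists a ∈ (0,1) such that f(r) > r for all 0 < r ≤ a. -/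
/-- A subadditive, monotone, continuous function `f : ℝ₊ → ℝ₊` with `f r ≥ r` and
`f r = 0 ↔ r = 0` which is not the identity satisfies `f r > r` for all small `r`. -/
theorem stmt_2 (f : NNReal → NNReal)
    (hsub : ∀ r₁ r₂ : NNReal, f (r₁ + r₂) ≤ f r₁ + f r₂)
    (hmono : Monotone f)
    (hge : ∀ r : NNReal, r ≤ f r)
    (hzero : ∀ r : NNReal, f r = 0 ↔ r = 0)
    (hcont : Continuous f)
    (hne : f ≠ id) :
    ∃ a : NNReal, 0 < a ∧ a < 1 ∧ ∀ r : NNReal, 0 < r → r ≤ a → r < f r := by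
  by_contra h
  push_neg at h
  apply hne
  have hfix : ∀ ε : NNReal, 0 < ε → ∃ r, 0 < r ∧ r ≤ ε ∧ f r = r := by
    intro ε hε
    obtain ⟨r, hr0, hra, hfr⟩ := h (min ε 2⁻¹) (lt_min hε (by norm_num))
      (min_lt_of_right_lt (by rw [NNReal.inv_lt_one_iff two_ne_zero]; norm_num))
    exact ⟨r, hr0, hra.trans (min_le_left _ _), le_antisymm hfr (hge r)⟩
  have hmul : ∀ (r : NNReal), f r = r → ∀ n : ℕ, f (n * r) = n * r := by
    intro r hr n
    induction n with
    | zero => simpa using (hzero 0).2 rfl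
    | succ n ih =>
      refine le_antisymm ?_ (hge _)
      have key : ((n : NNReal) + 1) * r = n * r + r := by ring
      push_cast
      rw [key]
      calc f (n * r + r) ≤ f (n * r) + f r := hsub _ _
        _ = n * r + r := by rw [ih, hr]
  funext x
  show f x = x
  refine le_antisymm (le_of_forall_pos_le_add ?_) (hge x)
  intro ε hε
  obtain ⟨r, hr0, hrε, hfr⟩ := hfix ε hε
  set n := ⌊x / r⌋₊ with hn
  have h1 : (n : NNReal) * r ≤ x := by
    rw [← le_div_iff₀ hr0]
    exact Nat.floor_le zero_le
  have h2 : x ≤ (n : NNReal) * r + r := by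
    have hlt := Nat.lt_floor_add_one (x / r)
    have hx : x < ((n : NNReal) + 1) * r := by
      rw [← div_lt_iff₀ hr0]
      exact_mod_cast hlt
    calc x ≤ ((n : NNReal) + 1) * r := hx.le
      _ = (n : NNReal) * r + r := by ring
  have hsplit : (n : NNReal) * r + (x - n * r) = x := add_tsub_cancel_of_le h1
  calc f x = f ((n : NNReal) * r + (x - n * r)) := by rw [hsplit]
    _ ≤ f ((n : NNReal) * r) + f (x - n * r) := hsub _ _
    _ ≤ (n : NNReal) * r + f r := add_le_add (hmul r hfr n).le (hmono (tsub_le_iff_left.mpr h2))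
    _ = (n : NNReal) * r + r := by rw [hfr]
    _ ≤ x + ε := add_le_add h1 hrε
end

section
/- Define Γ₀ on 𝒩_ω (the set of eventually-zero sequences of naturals) recursively by Γ₀(0̂,r) = r and for x ∈ 𝒩_m \ 𝒩_{m−1}, Γ₀(x,r) = min{2⁵(1 + 2^{x(0)} + 2^{x(0)+x(1)} + ⋯ + 2^{x(0)+⋯+x(m−1)})·r, Γ₀(π_{m−1}(x),r) + 2^{−m}}. Then for all x, y ∈ 𝒩_ω with d(x,y) ≤ 2^{−n} (i.e., x and y agree on coordinates < n) and all r ≥ 0: Γ₀(y,r) + 2^{−n} ≥ Γ₀(x,r). -/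
/-- Truncation `π_n`: keep the first `n` coordinates, zero afterwards. -/
def trunc (n : ℕ) (x : ℕ → ℕ) : ℕ → ℕ := fun m => if m < n then x m else 0

noncomputable def eG (k : ℕ) : ℝ := (2:ℝ) ^ (-(k:ℝ))

lemma eG_pos (k : ℕ) : 0 < eG k := Real.rpow_pos_of_pos two_pos _

lemma eG_succ (k : ℕ) : eG (k+1) = eG k / 2 := by
  unfold eG
  rw [div_eq_mul_inv, ← Real.rpow_neg_one 2, ← Real.rpow_add two_pos]
  congr 1
  push_cast
  ring

lemma expG_eq (m : ℕ) : (2:ℝ) ^ (-(m : ℝ) - 1) = eG (m+1) := by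
  unfold eG
  congr 1
  push_cast
  ring

noncomputable def coefG (k : ℕ) (x : ℕ → ℕ) : ℝ :=
  2 ^ 5 * (1 + ∑ i ∈ Finset.range k, (2 : ℝ) ^ (∑ j ∈ Finset.range (i + 1), x j))

lemma coefG_mono (k k' : ℕ) (x : ℕ → ℕ) (h : k ≤ k') : coefG k x ≤ coefG k' x := by
  unfold coefG
  have : (∑ i ∈ Finset.range k, (2 : ℝ) ^ (∑ j ∈ Finset.range (i + 1), x j)) ≤
      ∑ i ∈ Finset.range k', (2 : ℝ) ^ (∑ j ∈ Finset.range (i + 1), x j) := by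
    apply Finset.sum_le_sum_of_subset_of_nonneg (Finset.range_subset_range.mpr h)
    intro i _ _
    positivity
  nlinarith

lemma coefG_mono_pt (k : ℕ) (x y : ℕ → ℕ) (h : ∀ j, x j ≤ y j) :
    coefG k x ≤ coefG k y := by
  unfold coefG
  have : (∑ i ∈ Finset.range k, (2 : ℝ) ^ (∑ j ∈ Finset.range (i + 1), x j)) ≤
      ∑ i ∈ Finset.range k, (2 : ℝ) ^ (∑ j ∈ Finset.range (i + 1), y j) := by
    apply Finset.sum_le_sum
    intro i _
    apply pow_le_pow_right₀ one_le_two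
    exact Finset.sum_le_sum fun j _ => h j
  nlinarith

section Aux

variable (Γ₀ : (ℕ → ℕ) → ℝ → ℝ)
    (hzero : ∀ r : ℝ, Γ₀ (fun _ => 0) r = r)
    (hrec : ∀ (m : ℕ) (x : ℕ → ℕ), (∀ j, m + 1 ≤ j → x j = 0) → x m ≠ 0 →
      ∀ r : ℝ, Γ₀ x r =
        min ((2 ^ 5 * (1 + ∑ i ∈ Finset.range (m + 1),
              (2 : ℝ) ^ (∑ j ∈ Finset.range (i + 1), x j))) * r)
            (Γ₀ (trunc m x) r + 2 ^ (-(m : ℝ) - 1)))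

include hzero hrec in
/-- L1: the coefficient bound. -/
lemma G_bound : ∀ (k : ℕ) (x : ℕ → ℕ), (∀ j, k ≤ j → x j = 0) →
    ∀ r : ℝ, 0 ≤ r → Γ₀ x r ≤ coefG k x * r := by
  intro k
  induction k with
  | zero =>
    intro x hx r hr
    have hx0 : x = fun _ => 0 := funext fun j => hx j (Nat.zero_le j)
    rw [hx0, hzero]
    unfold coefG
    simp
    nlinarith
  | succ k ih =>
    intro x hx r hr
    by_cases hk : x k = 0
    · have hx' : ∀ j, k ≤ j → x j = 0 := by
        intro j hj
        rcases Nat.lt_or_ge j (k+1) with h | h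
        · have : j = k := by omega
          rw [this]; exact hk
        · exact hx j h
      calc Γ₀ x r ≤ coefG k x * r := ih x hx' r hr
        _ ≤ coefG (k+1) x * r := by
            apply mul_le_mul_of_nonneg_right (coefG_mono k (k+1) x (Nat.le_succ k)) hr
    · rw [hrec k x hx hk r]
      exact min_le_left _ _

include hzero hrec in
/-- L2: descent lemma. -/
lemma G_descent : ∀ (k : ℕ) (x : ℕ → ℕ), (∀ j, k ≤ j → x j = 0) →
    ∀ n : ℕ, n ≤ k → ∀ r : ℝ, Γ₀ x r ≤ Γ₀ (trunc n x) r + eG n - eG k := by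
  intro k
  induction k with
  | zero =>
    intro x hx n hn r
    interval_cases n
    have hx0 : trunc 0 x = x := by
      funext m
      simp [trunc, hx m (Nat.zero_le m)]
    rw [hx0]
    simp
  | succ k ih =>
    intro x hx n hn r
    rcases Nat.lt_or_ge n (k+1) with hnk | hnk
    · have hnk' : n ≤ k := by omega
      by_cases hk : x k = 0
      · have hx' : ∀ j, k ≤ j → x j = 0 := by
          intro j hj
          rcases Nat.lt_or_ge j (k+1) with h | h
          · have : j = k := by omega
            rw [this]; exact hk
          · exact hx j h
        have := ih x hx' n hnk' r
        have h2 : eG (k+1) ≤ eG k := by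
          rw [eG_succ]; linarith [eG_pos k]
        linarith
      · have hmin := hrec k x hx hk r
        rw [expG_eq] at hmin
        have hle : Γ₀ x r ≤ Γ₀ (trunc k x) r + eG (k+1) := by
          rw [hmin]; exact min_le_right _ _
        have htr : ∀ j, k ≤ j → trunc k x j = 0 := by
          intro j hj; simp [trunc]; omega
        have htt : trunc n (trunc k x) = trunc n x := by
          funext m
          simp only [trunc]
          split <;> rename_i h
          · rw [if_pos (by omega)]
          · rfl
        have := ih (trunc k x) htr n hnk' r
        rw [htt] at this
        have h2 : eG (k+1) = eG k / 2 := eG_succ k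
        calc Γ₀ x r ≤ Γ₀ (trunc k x) r + eG (k+1) := hle
          _ ≤ Γ₀ (trunc n x) r + eG n - eG k + eG (k+1) := by linarith
          _ = Γ₀ (trunc n x) r + eG n - eG (k+1) := by rw [h2]; ring
    · -- n = k+1, trunc n x = x
      have hn' : n = k + 1 := by omega
      subst hn'
      have hx0 : trunc (k+1) x = x := by
        funext m
        simp only [trunc]
        split
        · rfl
        · exact (hx m (by omega)).symm
      rw [hx0]
      simp

include hzero hrec in
/-- L3: truncation decreases Γ₀. -/
lemma G_trunc_le : ∀ (k : ℕ) (y : ℕ → ℕ), (∀ j, k ≤ j → y j = 0) →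
    ∀ n : ℕ, ∀ r : ℝ, 0 ≤ r → Γ₀ (trunc n y) r ≤ Γ₀ y r := by
  intro k
  induction k with
  | zero =>
    intro y hy n r hr
    have : trunc n y = y := by
      funext m
      simp only [trunc]
      split
      · rfl
      · exact (hy m (Nat.zero_le m)).symm
    rw [this]
  | succ k ih =>
    intro y hy n r hr
    rcases Nat.lt_or_ge n (k+1) with hnk | hnk
    · have hnk' : n ≤ k := by omega
      by_cases hk : y k = 0
      · have hy' : ∀ j, k ≤ j → y j = 0 := by
          intro j hj
          rcases Nat.lt_or_ge j (k+1) with h | h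
          · have : j = k := by omega
            rw [this]; exact hk
          · exact hy j h
        exact ih y hy' n r hr
      · have hmin := hrec k y hy hk r
        rw [expG_eq] at hmin
        rw [hmin]
        apply le_min
        · -- Γ₀ (trunc n y) ≤ coefG (k+1) y * r
          have h1 : Γ₀ (trunc n y) r ≤ coefG (k+1) (trunc n y) * r := by
            apply G_bound Γ₀ hzero hrec (k+1) (trunc n y) _ r hr
            intro j hj; simp [trunc]; omega
          have h2 : coefG (k+1) (trunc n y) ≤ coefG (k+1) y := by
            apply coefG_mono_pt
            intro j
            simp only [trunc]
            split
            · exact le_rfl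
            · exact Nat.zero_le _
          calc Γ₀ (trunc n y) r ≤ coefG (k+1) (trunc n y) * r := h1
            _ ≤ coefG (k+1) y * r := mul_le_mul_of_nonneg_right h2 hr
            _ = _ := by unfold coefG; ring_nf
        · -- Γ₀ (trunc n y) ≤ Γ₀ (trunc k y) + eG (k+1)
          have htr : ∀ j, k ≤ j → trunc k y j = 0 := by
            intro j hj; simp [trunc]; omega
          have htt : trunc n (trunc k y) = trunc n y := by
            funext m
            simp only [trunc]
            split <;> rename_i h
            · rw [if_pos (by omega)]
            · rfl
          have := ih (trunc k y) htr n r hr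
          rw [htt] at this
          linarith [eG_pos (k+1)]
    · have : trunc n y = y := by
        funext m
        simp only [trunc]
        split
        · rfl
        · exact (hy m (by omega)).symm
      rw [this]


end Aux

/-- (G1) for the scale Γ₀ of Example 4.11: if Γ₀ satisfies the defining recursion
(`Γ₀(0̂,r) = r` and, for `x ∈ 𝒩_{m+1} \ 𝒩_m`,
`Γ₀(x,r) = min{2⁵(1 + Σ_{i≤m} 2^{x(0)+⋯+x(i)})·r, Γ₀(π_m(x),r) + 2^{-(m+1)}}`),
then whenever `x` and `y` agree on coordinates `< n` (i.e. `d(x,y) ≤ 2^{-n}`),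
`Γ₀(y,r) + 2^{-n} ≥ Γ₀(x,r)`. -/
theorem stmt_9 (Γ₀ : (ℕ → ℕ) → ℝ → ℝ)
    (hzero : ∀ r : ℝ, Γ₀ (fun _ => 0) r = r)
    (hrec : ∀ (m : ℕ) (x : ℕ → ℕ), (∀ j, m + 1 ≤ j → x j = 0) → x m ≠ 0 →
      ∀ r : ℝ, Γ₀ x r =
        min ((2 ^ 5 * (1 + ∑ i ∈ Finset.range (m + 1),
              (2 : ℝ) ^ (∑ j ∈ Finset.range (i + 1), x j))) * r)
            (Γ₀ (trunc m x) r + 2 ^ (-(m : ℝ) - 1))) :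
    ∀ (x y : ℕ → ℕ), (∃ n, ∀ j, n ≤ j → x j = 0) → (∃ n, ∀ j, n ≤ j → y j = 0) →
      ∀ n : ℕ, (∀ j, j < n → x j = y j) →
        ∀ r : ℝ, 0 ≤ r → Γ₀ x r ≤ Γ₀ y r + 2 ^ (-(n : ℝ)) := by
  intro x y ⟨kx, hkx⟩ ⟨ky, hky⟩ n hagree r hr
  set k := max n kx with hk
  have hxk : ∀ j, k ≤ j → x j = 0 := fun j hj => hkx j (le_trans (le_max_right _ _) hj)
  have h1 : Γ₀ x r ≤ Γ₀ (trunc n x) r + eG n - eG k :=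
    G_descent Γ₀ hzero hrec k x hxk n (le_max_left _ _) r
  have heq : trunc n x = trunc n y := by
    funext m
    simp only [trunc]
    split <;> rename_i h
    · exact hagree m h
    · rfl
  have h2 : Γ₀ (trunc n y) r ≤ Γ₀ y r :=
    G_trunc_le Γ₀ hzero hrec ky y hky n r hr
  have hge : (2:ℝ) ^ (-(n : ℝ)) = eG n := rfl
  rw [hge]
  rw [heq] at h1
  linarith [eG_pos k]
end

section
/- Let m ≤ n be natural numbers and call a bijection θ on {m, …, n} a match if θ∘θ = id and there are no i, j with m ≤ i < j < θ(i) < θ(j). If θ is a match on {0, …, l} with l > 0 and θ(0) = k < l, then θ restricted to {0, …, k} and θ restricted to {k+1, …, l} are both matches (in particular θ maps each of these intervals into itself). -/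
/-- `θ` is a match on the integer interval `{m, …, n}`: it maps the interval to
itself, is an involution there, and has no crossing pair `i < j < θ i < θ j`. -/
def IsMatch (m n : ℕ) (θ : ℕ → ℕ) : Prop :=
  (∀ i, m ≤ i → i ≤ n → m ≤ θ i ∧ θ i ≤ n) ∧
  (∀ i, m ≤ i → i ≤ n → θ (θ i) = i) ∧
  ¬∃ i j, m ≤ i ∧ i < j ∧ j < θ i ∧ θ i < θ j ∧ θ j ≤ n

/-- If `θ` is a match on `{0, …, l}` with `l > 0` and `θ 0 = k < l`, then the
restrictions of `θ` to `{0, …, k}` and to `{k+1, …, l}` are matches. -/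
theorem stmt_15 (l k : ℕ) (θ : ℕ → ℕ) (hl : 0 < l)
    (hθ : IsMatch 0 l θ) (hk : θ 0 = k) (hkl : k < l) :
    IsMatch 0 k θ ∧ IsMatch (k + 1) l θ := by
  obtain ⟨hmap, hinv, hcross⟩ := hθ
  have hk0 : θ k = 0 := by rw [← hk]; exact hinv 0 le_rfl (by omega)
  have h1 : ∀ i, i ≤ k → θ i ≤ k := by
    intro i hi
    rcases Nat.eq_zero_or_pos i with h | h
    · subst h; omega
    rcases eq_or_lt_of_le hi with h2 | h2
    · subst h2; omega
    by_contra hc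
    exact hcross ⟨0, i, le_rfl, h, by omega, by omega, (hmap i (by omega) (by omega)).2⟩
  have h2 : ∀ i, k + 1 ≤ i → i ≤ l → k + 1 ≤ θ i := by
    intro i hi hil
    by_contra hc
    push_neg at hc
    have hii : θ (θ i) = i := hinv i (by omega) hil
    have hne0 : θ i ≠ 0 := by
      intro h0
      rw [h0] at hii
      omega
    have hnek : θ i ≠ k := by
      intro h0
      rw [h0, hk0] at hii
      omega
    exact hcross ⟨0, θ i, le_rfl, by omega, by omega, by omega, by omega⟩
  refine ⟨⟨fun i _ hi => ⟨Nat.zero_le _, h1 i hi⟩,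
           fun i _ hi => hinv i (Nat.zero_le _) (by omega), ?_⟩,
          ⟨fun i hi hil => ⟨h2 i hi hil, (hmap i (by omega) hil).2⟩,
           fun i hi hil => hinv i (by omega) hil, ?_⟩⟩
  · rintro ⟨i, j, hi, hij, hjθ, hθθ, hθj⟩
    exact hcross ⟨i, j, hi, hij, hjθ, hθθ, by omega⟩
  · rintro ⟨i, j, hi, hij, hjθ, hθθ, hθj⟩
    exact hcross ⟨i, j, by omega, hij, hjθ, hθθ, hθj⟩
end
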